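/- Let 0 < β < 1 < T/β, λ ≥ λ₁ > 0, T > 0, and 0 ≤ s ≤ t ≤ T. Then (Ψ(β,λ,s,t) − e^{√λ(s-t)}/(2√λ))² ≤ (1/λ₁)(β/T)^{(2s-2t)/T}(ln(T/β))^{(2s-2t)/T}, where Ψ(β,λ,s,t) = e^{-√λ(T+s-t)}/(2βλ + 2√λ e^{-√λ T}). -/

import Mathlib

lemma log_le_half_aux (u : ℝ) (hu : 0 < u) : Real.log u ≤ u / 2 := by
  have h1 : Real.log (Real.sqrt u) ≤ Real.sqrt u - 1 :=
    Real.log_le_sub_one_of_pos (Real.sqrt_pos.mpr hu)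
  have h2 : Real.log (Real.sqrt u) = Real.log u / 2 := Real.log_sqrt hu.le
  nlinarith [Real.sq_sqrt hu.le, sq_nonneg (Real.sqrt u - 2)]


theorem Psi_difference_sq_bound (β T lam lam1 s t : ℝ) (hβ0 : 0 < β) (hβ1 : β < 1)
    (hβT : 1 < T / β) (hT : 0 < T) (hlam1 : 0 < lam1) (hlam : lam1 ≤ lam)
    (hs : 0 ≤ s) (hst : s ≤ t) (ht : t ≤ T) :
    (Real.exp (-Real.sqrt lam * (T + s - t)) /
          (2 * β * lam + 2 * Real.sqrt lam * Real.exp (-Real.sqrt lam * T)) -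
        Real.exp (Real.sqrt lam * (s - t)) / (2 * Real.sqrt lam)) ^ 2 ≤
      (1 / lam1) * (β / T) ^ ((2 * s - 2 * t) / T) *
        (Real.log (T / β)) ^ ((2 * s - 2 * t) / T) := by
  have hlam0 : (0:ℝ) < lam := lt_of_lt_of_le hlam1 hlam
  set r := Real.sqrt lam with hrdef
  have hr : 0 < r := Real.sqrt_pos.mpr hlam0
  have hrr : r * r = lam := Real.mul_self_sqrt hlam0.le
  set θ := (t - s) / T with hθdef
  have hθ0 : 0 ≤ θ := by
    apply div_nonneg (by linarith) hT.le
  have hθ1 : θ ≤ 1 := by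
    rw [hθdef, div_le_one hT]; linarith
  have hθT : θ * T = t - s := by
    rw [hθdef]; field_simp
  set u := Real.log (T / β) with hudef
  have hu : 0 < u := Real.log_pos hβT
  have hxpos : 0 < T / β := by positivity
  set C := β / T * u with hCdef
  have hC0 : 0 < C := by positivity
  have hC1 : C < 1 := by
    have h1 : u ≤ T / β - 1 := Real.log_le_sub_one_of_pos hxpos
    have h2 : β / T * u < β / T * (T / β) := by
      apply mul_lt_mul_of_pos_left _ (by positivity)
      calc u ≤ T / β - 1 := h1
        _ < T / β := by linarith
    calc C < β / T * (T / β) := h2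
      _ = 1 := by field_simp
  set K := C ^ (-θ) with hKdef
  have hK0 : 0 < K := Real.rpow_pos_of_pos hC0 _
  have hK1 : 1 ≤ K := Real.one_le_rpow_of_pos_of_le_one_of_nonpos hC0 hC1.le (by linarith)
  -- RHS equals (1/lam1) * K^2
  have hRHS : (1 / lam1) * (β / T) ^ ((2 * s - 2 * t) / T) *
      (Real.log (T / β)) ^ ((2 * s - 2 * t) / T) = (1 / lam1) * K ^ 2 := by
    have hy : (2 * s - 2 * t) / T = -θ * 2 := by rw [hθdef]; ring
    rw [mul_assoc, ← Real.mul_rpow (by positivity) hu.le, hy, ← hCdef,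
      Real.rpow_mul hC0.le, ← hKdef]
    norm_num
  rw [hRHS]
  -- denominators
  have ha : (0:ℝ) < 2 * β * lam := by positivity
  have hb : (0:ℝ) < 2 * r * Real.exp (-r * T) := by positivity
  have hD : (0:ℝ) < 2 * β * lam + 2 * r * Real.exp (-r * T) := by positivity
  set Ψ := Real.exp (-r * (T + s - t)) / (2 * β * lam + 2 * r * Real.exp (-r * T)) with hΨdef
  set A := Real.exp (r * (s - t)) / (2 * r) with hAdef
  have hΨ0 : 0 ≤ Ψ := by positivity
  have hA0 : 0 ≤ A := by positivity
  have hA : A ≤ 1 / (2 * r) := by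
    rw [hAdef]
    apply div_le_div_of_nonneg_right _ (by positivity)
    · exact Real.exp_le_one_iff.mpr (mul_nonpos_of_nonneg_of_nonpos hr.le (by linarith))
  -- first Psi bound
  have hΨ1 : Ψ ≤ Real.exp (r * (t - s)) / (2 * r) := by
    have h1 : Ψ ≤ Real.exp (-r * (T + s - t)) / (2 * r * Real.exp (-r * T)) := by
      rw [hΨdef]
      apply div_le_div_of_nonneg_left (Real.exp_nonneg _) hb
      exact le_add_of_nonneg_left ha.le
    have h2 : Real.exp (-r * (T + s - t)) / (2 * r * Real.exp (-r * T)) =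
        Real.exp (r * (t - s)) / (2 * r) := by
      rw [show -r * (T + s - t) = r * (t - s) + -r * T by ring, Real.exp_add]
      rw [mul_comm (2 * r) (Real.exp (-r * T)), ← div_div]
      rw [mul_div_assoc, div_self (Real.exp_ne_zero _), mul_one]
    linarith
  -- AM-GM style bound for denominator
  set G := (2 * β * lam) ^ θ * (2 * r * Real.exp (-r * T)) ^ (1 - θ) with hGdef
  have hG0 : 0 < G := by positivity
  have hG : G ≤ 2 * β * lam + 2 * r * Real.exp (-r * T) := by
    set Mx := max (2 * β * lam) (2 * r * Real.exp (-r * T)) with hMxdef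
    have hMx : 0 < Mx := lt_max_of_lt_left ha
    have h1 : G ≤ Mx ^ θ * Mx ^ (1 - θ) := by
      apply mul_le_mul
      · exact Real.rpow_le_rpow ha.le (le_max_left _ _) hθ0
      · exact Real.rpow_le_rpow hb.le (le_max_right _ _) (by linarith)
      · exact Real.rpow_nonneg hb.le _
      · exact Real.rpow_nonneg hMx.le _
    have h2 : Mx ^ θ * Mx ^ (1 - θ) = Mx := by
      rw [← Real.rpow_add hMx]; norm_num
    have h3 : Mx ≤ 2 * β * lam + 2 * r * Real.exp (-r * T) :=
      max_le (le_add_of_nonneg_right hb.le) (le_add_of_nonneg_left ha.le)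
    linarith
  -- key identity
  have hkey : Real.exp (-r * (T + s - t)) * (2 * r) = (β * r) ^ (-θ) * G := by
    have l2r : 2 * r = Real.exp (Real.log (2 * r)) := (Real.exp_log (by positivity)).symm
    rw [hGdef, Real.rpow_def_of_pos (show (0:ℝ) < β * r by positivity),
      Real.rpow_def_of_pos ha, Real.rpow_def_of_pos hb]
    have e1 : Real.log (β * r) = Real.log β + Real.log r :=
      Real.log_mul hβ0.ne' hr.ne'
    have e2 : Real.log (2 * β * lam) = Real.log 2 + Real.log β + 2 * Real.log r := by
      rw [← hrr, show 2 * β * (r * r) = 2 * (β * (r * r)) by ring,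
        Real.log_mul (by norm_num) (by positivity),
        Real.log_mul hβ0.ne' (by positivity), Real.log_mul hr.ne' hr.ne']
      ring
    have e3 : Real.log (2 * r * Real.exp (-r * T)) =
        Real.log 2 + Real.log r + (-r * T) := by
      rw [Real.log_mul (by positivity) (Real.exp_ne_zero _),
        Real.log_mul (by norm_num) hr.ne', Real.log_exp]
    have e4 : Real.log (2 * r) = Real.log 2 + Real.log r :=
      Real.log_mul (by norm_num) hr.ne'
    rw [e1, e2, e3]
    rw [l2r, e4, ← Real.exp_add, ← Real.exp_add, ← Real.exp_add]
    rw [Real.exp_eq_exp, hθdef]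
    field_simp
    ring
  -- second Psi bound
  have hΨ2 : Ψ ≤ (β * r) ^ (-θ) / (2 * r) := by
    have h1 : Ψ ≤ Real.exp (-r * (T + s - t)) / G := by
      rw [hΨdef]
      exact div_le_div_of_nonneg_left (Real.exp_nonneg _) hG0 hG
    have h2 : Real.exp (-r * (T + s - t)) / G = (β * r) ^ (-θ) / (2 * r) := by
      rw [div_eq_div_iff hG0.ne' (by positivity : (0:ℝ) < 2*r).ne']
      linarith [hkey]
    linarith
  -- the main upper bound: Ψ ≤ K / r  (via 2K/(2r))
  have hup : Ψ ≤ 2 * K / (2 * r) := by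
    rcases le_total (u / (2 * T)) r with hcase | hcase
    · -- big r: use hΨ2
      have hβr : C / 2 ≤ β * r := by
        have : β * (u / (2 * T)) ≤ β * r := mul_le_mul_of_nonneg_left hcase hβ0.le
        calc C / 2 = β * (u / (2 * T)) := by rw [hCdef]; ring
          _ ≤ β * r := this
      have h1 : (β * r) ^ (-θ) ≤ (C / 2) ^ (-θ) :=
        Real.rpow_le_rpow_of_nonpos (by positivity) hβr (by linarith)
      have h2 : (C / 2) ^ (-θ) = K * 2 ^ θ := by
        rw [hKdef, div_eq_mul_inv, Real.mul_rpow hC0.le (by norm_num),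
          ← Real.rpow_neg_one (2:ℝ), ← Real.rpow_mul (by norm_num)]
        norm_num
      have h3 : (2:ℝ) ^ θ ≤ 2 := by
        calc (2:ℝ) ^ θ ≤ (2:ℝ) ^ (1:ℝ) := Real.rpow_le_rpow_of_exponent_le one_le_two hθ1
          _ = 2 := Real.rpow_one 2
      have h4 : (β * r) ^ (-θ) ≤ 2 * K := by
        calc (β * r) ^ (-θ) ≤ K * 2 ^ θ := by rw [← h2]; exact h1
          _ ≤ K * 2 := mul_le_mul_of_nonneg_left h3 hK0.le
          _ = 2 * K := by ring
      calc Ψ ≤ (β * r) ^ (-θ) / (2 * r) := hΨ2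
        _ ≤ 2 * K / (2 * r) := div_le_div_of_nonneg_right h4 (by positivity)
    · -- small r: use hΨ1
      have hlogu : Real.log u ≤ u / 2 := log_le_half_aux u hu
      have hrT : r * T ≤ u - Real.log u := by
        have : r * T ≤ u / 2 := by
          calc r * T ≤ u / (2 * T) * T := mul_le_mul_of_nonneg_right hcase hT.le
            _ = u / 2 := by field_simp
        linarith
      have hexp : Real.exp (r * T) ≤ 1 / C := by
        have h1 : Real.exp (r * T) ≤ Real.exp (u - Real.log u) := Real.exp_le_exp.mpr hrT
        have h2 : Real.exp (u - Real.log u) = (T / β) / u := by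
          rw [Real.exp_sub, Real.exp_log hu, hudef, Real.exp_log hxpos]
        have h3 : (T / β) / u = 1 / C := by
          rw [hCdef]; field_simp
        rw [h2, h3] at h1; exact h1
      have h4 : Real.exp (r * (t - s)) ≤ K := by
        have h5 : Real.exp (r * (t - s)) = Real.exp (r * T) ^ θ := by
          rw [← Real.exp_mul]
          congr 1
          rw [← hθT]; ring
        have h6 : Real.exp (r * T) ^ θ ≤ (1 / C) ^ θ :=
          Real.rpow_le_rpow (Real.exp_nonneg _) hexp hθ0
        have h7 : (1 / C) ^ θ = K := by
          rw [hKdef, one_div, ← Real.rpow_neg_one C, ← Real.rpow_mul hC0.le]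
          norm_num
        rw [h5]; rw [h7] at h6; exact h6
      calc Ψ ≤ Real.exp (r * (t - s)) / (2 * r) := hΨ1
        _ ≤ K / (2 * r) := div_le_div_of_nonneg_right h4 (by positivity)
        _ ≤ 2 * K / (2 * r) := div_le_div_of_nonneg_right (by linarith) (by positivity)
  -- combine
  have hlow : -(K / r) ≤ Ψ - A := by
    have h1 : A ≤ K / r := by
      calc A ≤ 1 / (2 * r) := hA
        _ ≤ K / (2 * r) := div_le_div_of_nonneg_right hK1 (by positivity)
        _ ≤ K / r := div_le_div_of_nonneg_left hK0.le hr (by linarith)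
    linarith
  have hup' : Ψ - A ≤ K / r := by
    have : 2 * K / (2 * r) = K / r := mul_div_mul_left K r two_ne_zero
    rw [this] at hup
    linarith
  have hsq : (Ψ - A) ^ 2 ≤ (K / r) ^ 2 := sq_le_sq' hlow hup'
  calc (Ψ - A) ^ 2 ≤ (K / r) ^ 2 := hsq
    _ = K ^ 2 / lam := by rw [div_pow, ← hrr]; ring_nf
    _ ≤ K ^ 2 / lam1 := by
        apply div_le_div_of_nonneg_left (by positivity) hlam1 hlam
    _ = 1 / lam1 * K ^ 2 := by ring
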